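/- arXiv:1604.03348 — 2 statements merged into one kernel-verified Lean document; each statement's English description precedes it below -/
import Mathlib

section
/- Let m ≥ 1, X a real d×m matrix with columns x₁,…,x_m, y ∈ {−1,+1}^m, Y = diag(y), e ∈ ℝ^m the all-ones vector, λ₁ ≥ 0, λ₂ ∈ ℝ, C > 0. Set A = 2λ₁(m I − y yᵀ)/m², G = XᵀX, assume I + A G is invertible, let H = Y G (I + A G)⁻¹ Y with entries h_ij, assume H is symmetric positive semidefinite and h_ii > 0 for all i, and set q = (λ₂/m) H e − e and f(α) = (1/2) αᵀHα + qᵀα. Let α* be a minimizer of f over the box B = {α : 0 ≤ α ≤ (C/m)e}, for each i let α^i be a minimizer of f over B ∩ {α : α_i = 0}, and define w(α) = X (I + A G)⁻¹ Y (α + (λ₂/m) e). Then the number of indices i ∈ {1,…,m} with y_i x_iᵀ w(α^i) < 0 is at most Σ_{i : 0 < α*_i < C/m} α*_i h_ii + #{ i : α*_i = C/m }. -/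
open Matrix

private lemma aux_nonneg (a b : ℝ) (hb : 0 ≤ b)
    (h : ∀ t : ℝ, 0 < t → t ≤ 1 → 0 ≤ t * a + t ^ 2 * b) : 0 ≤ a := by
  by_contra hneg
  push_neg at hneg
  have hb1 : (0:ℝ) < 2 * b + 1 := by linarith
  set t : ℝ := min 1 (-a / (2 * b + 1)) with ht
  have htpos : 0 < t := lt_min one_pos (div_pos (by linarith) hb1)
  have ht1 : t ≤ 1 := min_le_left _ _
  have ht2 : t * (2 * b + 1) ≤ -a := by
    have := min_le_right (1:ℝ) (-a / (2 * b + 1))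
    calc t * (2 * b + 1) ≤ (-a / (2 * b + 1)) * (2 * b + 1) := by
          exact mul_le_mul_of_nonneg_right this hb1.le
      _ = -a := by field_simp
  have hkey := h t htpos ht1
  nlinarith [mul_pos htpos htpos, mul_nonneg htpos.le hb]

private lemma psd_sym {m : ℕ} {H : Matrix (Fin m) (Fin m) ℝ} (hH : H.PosSemidef)
    (u v : Fin m → ℝ) : u ⬝ᵥ (H *ᵥ v) = v ⬝ᵥ (H *ᵥ u) := by
  have hsym : Hᵀ = H := by
    simpa [Matrix.IsHermitian, Matrix.conjTranspose_eq_transpose_of_trivial] using hH.1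
  rw [Matrix.dotProduct_mulVec, ← Matrix.mulVec_transpose, hsym, dotProduct_comm]

private lemma psd_nonneg {m : ℕ} {H : Matrix (Fin m) (Fin m) ℝ} (hH : H.PosSemidef)
    (x : Fin m → ℝ) : 0 ≤ x ⬝ᵥ (H *ᵥ x) := by
  simpa using hH.dotProduct_mulVec_nonneg x

private lemma psd_cs {m : ℕ} {H : Matrix (Fin m) (Fin m) ℝ} (hH : H.PosSemidef)
    (u v : Fin m → ℝ) :
    (u ⬝ᵥ (H *ᵥ v)) ^ 2 ≤ (u ⬝ᵥ (H *ᵥ u)) * (v ⬝ᵥ (H *ᵥ v)) := by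
  obtain ⟨Qu, hQu⟩ : ∃ x, u ⬝ᵥ (H *ᵥ u) = x := ⟨_, rfl⟩
  obtain ⟨Qv, hQv⟩ : ∃ x, v ⬝ᵥ (H *ᵥ v) = x := ⟨_, rfl⟩
  obtain ⟨c, hc⟩ : ∃ x, u ⬝ᵥ (H *ᵥ v) = x := ⟨_, rfl⟩
  rw [hQu, hQv, hc]
  have hQv0 : 0 ≤ Qv := hQv ▸ psd_nonneg hH v
  have key : ∀ t : ℝ, 0 ≤ Qu + 2 * t * c + t ^ 2 * Qv := by
    intro t
    have h0 := psd_nonneg hH (u + t • v)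
    have expand : (u + t • v) ⬝ᵥ (H *ᵥ (u + t • v)) = Qu + 2 * t * c + t ^ 2 * Qv := by
      simp only [Matrix.mulVec_add, Matrix.mulVec_smul, dotProduct_add,
        add_dotProduct, dotProduct_smul, smul_dotProduct, smul_eq_mul]
      rw [psd_sym hH v u, hQu, hQv, hc]
      ring
    rw [expand] at h0
    exact h0
  rcases eq_or_lt_of_le hQv0 with h0 | hpos
  · have hc0 : c = 0 := by
      by_contra hcne
      have ht : 2 * ((-Qu - 1) / (2 * c)) * c = -Qu - 1 := by
        field_simp
      have hk := key ((-Qu - 1) / (2 * c))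
      rw [ht, ← h0] at hk
      simp at hk
      linarith
    rw [hc0, ← h0]
    simp
  · have hQvne : Qv ≠ 0 := ne_of_gt hpos
    have heq : Qu + 2 * (-c / Qv) * c + (-c / Qv) ^ 2 * Qv = Qu - c ^ 2 / Qv := by
      field_simp
      ring
    have h5 : 0 ≤ Qu - c ^ 2 / Qv := heq ▸ key (-c / Qv)
    have h6 : c ^ 2 / Qv * Qv = c ^ 2 := by field_simp
    have h7 : c ^ 2 / Qv * Qv ≤ Qu * Qv :=
      mul_le_mul_of_nonneg_right (by linarith) hpos.le
    rw [h6] at h7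
    exact h7

private lemma foc_lemma {m : ℕ} {H : Matrix (Fin m) (Fin m) ℝ} (hH : H.PosSemidef)
    {q a v : Fin m → ℝ} {f : (Fin m → ℝ) → ℝ}
    (hf : ∀ α, f α = (1 / 2) * (α ⬝ᵥ (H *ᵥ α)) + q ⬝ᵥ α)
    (hmin : ∀ t : ℝ, 0 < t → t ≤ 1 → f a ≤ f (a + t • v)) :
    0 ≤ (H *ᵥ a + q) ⬝ᵥ v := by
  apply aux_nonneg _ ((1/2) * (v ⬝ᵥ (H *ᵥ v)))
    (by have := psd_nonneg hH v; linarith)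
  intro t ht0 ht1
  have hexp : f (a + t • v) = f a + t * ((H *ᵥ a + q) ⬝ᵥ v)
      + t ^ 2 * ((1/2) * (v ⬝ᵥ (H *ᵥ v))) := by
    rw [hf, hf]
    simp only [Matrix.mulVec_add, Matrix.mulVec_smul, dotProduct_add,
      add_dotProduct, dotProduct_smul, smul_dotProduct, smul_eq_mul]
    rw [psd_sym hH a v, dotProduct_comm (H *ᵥ a) v]
    ring
  have := hmin t ht0 ht1
  rw [hexp] at this
  linarith

/-- The deterministic leave-one-out bound from the proof of Theorem 2 of the paper: for the
dual kernel ODM^L problem `min f(α) = (1/2) αᵀHα + qᵀα` over the box `0 ≤ α ≤ (C/m)e`, with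
`α*` a minimizer over the box, `αⁱ` a minimizer with the extra constraint `αᵢ = 0`, and
`w(α) = X (I + A G)⁻¹ Y (α + (λ₂/m)e)` the recovered primal weight vector, the number of
leave-one-out errors `#{i : yᵢ xᵢᵀ w(αⁱ) < 0}` is at most
`∑_{0 < α*ᵢ < C/m} α*ᵢ hᵢᵢ + #{i : α*ᵢ = C/m}`. -/
theorem stmt_16 {d m : ℕ} (hm : 1 ≤ m) (X : Matrix (Fin d) (Fin m) ℝ)
    (y : Fin m → ℝ) (hy : ∀ i, y i = 1 ∨ y i = -1)
    (Y : Matrix (Fin m) (Fin m) ℝ) (hY : Y = Matrix.diagonal y)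
    (e : Fin m → ℝ) (he : e = fun _ => 1)
    (lam₁ lam₂ C : ℝ) (hlam₁ : 0 ≤ lam₁) (hC : 0 < C)
    (A G H : Matrix (Fin m) (Fin m) ℝ)
    (hA : A = (2 * lam₁ / (m : ℝ) ^ 2) • ((m : ℝ) • 1 - vecMulVec y y))
    (hG : G = Xᵀ * X)
    (hinv : IsUnit (1 + A * G))
    (hH : H = Y * G * (1 + A * G)⁻¹ * Y)
    (hHpsd : H.PosSemidef) (hdiag : ∀ i, 0 < H i i)
    (q : Fin m → ℝ) (hq : q = (lam₂ / m) • (H *ᵥ e) - e)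
    (f : (Fin m → ℝ) → ℝ)
    (hf : ∀ α, f α = (1 / 2) * (α ⬝ᵥ (H *ᵥ α)) + q ⬝ᵥ α)
    (B : Set (Fin m → ℝ))
    (hB : B = {α | ∀ j, 0 ≤ α j ∧ α j ≤ C / m})
    (αstar : Fin m → ℝ) (hstar : αstar ∈ B ∧ ∀ α ∈ B, f αstar ≤ f α)
    (αi : Fin m → (Fin m → ℝ))
    (hαi : ∀ i, (αi i ∈ B ∧ αi i i = 0) ∧ ∀ α ∈ B, α i = 0 → f (αi i) ≤ f α)
    (w : (Fin m → ℝ) → (Fin d → ℝ))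
    (hw : ∀ α, w α = X *ᵥ ((1 + A * G)⁻¹ *ᵥ (Y *ᵥ (α + (lam₂ / m) • e)))) :
    ((Finset.univ.filter fun i : Fin m =>
        y i * ((fun j => X j i) ⬝ᵥ w (αi i)) < 0).card : ℝ)
      ≤ ∑ i ∈ Finset.univ.filter (fun i : Fin m => 0 < αstar i ∧ αstar i < C / m),
            αstar i * H i i
        + ((Finset.univ.filter fun i : Fin m => αstar i = C / m).card : ℝ) := by
  classical
  obtain ⟨hstarB, hstarMin⟩ := hstar
  have hm0 : (0:ℝ) < m := by exact_mod_cast Nat.lt_of_lt_of_le Nat.zero_lt_one hm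
  have hCm : (0:ℝ) < C / m := div_pos hC hm0
  -- box membership unfold
  have hmemB : ∀ α, α ∈ B ↔ ∀ j, 0 ≤ α j ∧ α j ≤ C / m := by
    intro α; rw [hB]; rfl
  -- the box is convex along segments
  have hseg : ∀ a ∈ B, ∀ b ∈ B, ∀ t : ℝ, 0 ≤ t → t ≤ 1 → a + t • (b - a) ∈ B := by
    intro a ha b hb t ht0 ht1
    rw [hmemB] at *
    intro j
    have hja := ha j
    have hjb := hb j
    simp only [Pi.add_apply, Pi.smul_apply, Pi.sub_apply, smul_eq_mul]
    constructor <;> nlinarith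
  -- first-order optimality conditions
  have focStar : ∀ α ∈ B, 0 ≤ (H *ᵥ αstar + q) ⬝ᵥ (α - αstar) := by
    intro α hα
    exact foc_lemma hHpsd hf (fun t ht0 ht1 =>
      hstarMin _ (hseg _ hstarB _ hα t ht0.le ht1))
  have focI : ∀ i : Fin m, ∀ α ∈ B, α i = 0 →
      0 ≤ (H *ᵥ (αi i) + q) ⬝ᵥ (α - αi i) := by
    intro i α hα hα0
    refine foc_lemma hHpsd hf (fun t ht0 ht1 => (hαi i).2 _
      (hseg _ (hαi i).1.1 _ hα t ht0.le ht1) ?_)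
    simp [Pi.add_apply, (hαi i).1.2, hα0]
  -- classifier identity : y i * xᵢᵀ w α = (H α + q) i + 1
  have hcls : ∀ α (i : Fin m),
      y i * ((fun j => X j i) ⬝ᵥ w α) = (H *ᵥ α + q) i + 1 := by
    intro α i
    set u : Fin m → ℝ := (1 + A * G)⁻¹ *ᵥ (Y *ᵥ (α + (lam₂ / m) • e)) with hu
    have hcol : (fun j => X j i) ⬝ᵥ (X *ᵥ u) = (G *ᵥ u) i := by
      rw [hG]
      simp only [Matrix.mulVec, dotProduct, Matrix.mul_apply,
        Matrix.transpose_apply, Finset.sum_mul, Finset.mul_sum]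
      rw [Finset.sum_comm]
      apply Finset.sum_congr rfl
      intro k _
      apply Finset.sum_congr rfl
      intro j _
      ring
    have h1 : y i * (G *ᵥ u) i = (Y *ᵥ (G *ᵥ u)) i := by
      rw [hY, Matrix.mulVec_diagonal]
    have h2 : Y *ᵥ (G *ᵥ u) = H *ᵥ (α + (lam₂ / m) • e) := by
      rw [hu, Matrix.mulVec_mulVec, Matrix.mulVec_mulVec, Matrix.mulVec_mulVec, hH,
        Matrix.mul_assoc, Matrix.mul_assoc]
    have h3 : (H *ᵥ (α + (lam₂ / m) • e)) i
        = (H *ᵥ α) i + (lam₂ / m) * (H *ᵥ e) i := by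
      rw [Matrix.mulVec_add, Matrix.mulVec_smul]
      simp [smul_eq_mul]
    have h4 : q i = (lam₂ / m) * (H *ᵥ e) i - 1 := by
      rw [hq]; simp [he]
    rw [hw, hcol, h1, h2, h3]
    simp only [Pi.add_apply, h4]
    ring
  -- the key per-index dichotomy
  have key : ∀ i : Fin m, y i * ((fun j => X j i) ⬝ᵥ w (αi i)) < 0 →
      αstar i = C / m ∨ (0 < αstar i ∧ αstar i < C / m ∧ 1 ≤ αstar i * H i i) := by
    intro i herr
    have hgi : (H *ᵥ (αi i) + q) i < -1 := by
      have hc := hcls (αi i) i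
      rw [hc] at herr
      linarith
    by_cases hCmi : αstar i = C / m
    · exact Or.inl hCmi
    right
    have hbox := (hmemB αstar).1 hstarB i
    have hlt : αstar i < C / m := lt_of_le_of_ne hbox.2 hCmi
    have hposi : 0 < αstar i := by
      rcases eq_or_lt_of_le hbox.1 with h0 | h
      · exfalso
        -- αstar i = 0 : then αi i is a global minimizer over B
        have hminB : ∀ α ∈ B, f (αi i) ≤ f α := fun α hα =>
          le_trans ((hαi i).2 αstar hstarB h0.symm) (hstarMin α hα)
        set v : Fin m → ℝ := Pi.single i (C / m) with hv
        have hvmem : (αi i + v) ∈ B := by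
          rw [hmemB]
          intro j
          by_cases hji : j = i
          · rw [hji]
            simp only [Pi.add_apply, hv, Pi.single_eq_same, (hαi i).1.2, zero_add]
            exact ⟨hCm.le, le_refl _⟩
          · simp only [Pi.add_apply, hv, Pi.single_eq_of_ne hji, add_zero]
            exact (hmemB _).1 (hαi i).1.1 j
        have h1 : 0 ≤ (H *ᵥ (αi i) + q) ⬝ᵥ v := by
          have := foc_lemma hHpsd hf (fun t ht0 ht1 =>
            hminB _ (hseg _ (hαi i).1.1 _ hvmem t ht0.le ht1))
          simpa using this
        have h2 : (H *ᵥ (αi i) + q) ⬝ᵥ v = ((H *ᵥ (αi i) + q) i) * (C / m) := by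
          rw [hv, dotProduct_single]
        rw [h2] at h1
        nlinarith
      · exact h
    refine ⟨hposi, hlt, ?_⟩
    -- gradient at αstar has nonneg i-th coordinate
    have hgs : 0 ≤ (H *ᵥ αstar + q) i := by
      have hmem : (αstar + (C / m - αstar i) • (Pi.single i 1 : Fin m → ℝ)) ∈ B := by
        rw [hmemB]
        intro j
        by_cases hji : j = i
        · rw [hji]
          simp only [Pi.add_apply, Pi.smul_apply, Pi.single_eq_same, smul_eq_mul, mul_one]
          constructor <;> nlinarith [hbox.1, hbox.2]
        · simp only [Pi.add_apply, Pi.smul_apply, Pi.single_eq_of_ne hji, smul_eq_mul,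
            mul_zero, add_zero]
          exact (hmemB αstar).1 hstarB j
      have := focStar _ hmem
      rw [add_sub_cancel_left, dotProduct_smul, smul_eq_mul,
        dotProduct_single, mul_one] at this
      nlinarith
    -- the two variational inequalities
    set δ : Fin m → ℝ := αstar - αi i with hδ
    have h1 : 0 ≤ (H *ᵥ αstar + q) ⬝ᵥ (αi i - αstar) := focStar _ (hαi i).1.1
    have hβmem : (αstar - (αstar i) • (Pi.single i 1 : Fin m → ℝ)) ∈ B := by
      rw [hmemB]
      intro j
      by_cases hji : j = i
      · rw [hji]
        simp only [Pi.sub_apply, Pi.smul_apply, Pi.single_eq_same, smul_eq_mul, mul_one,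
          sub_self]
        exact ⟨le_refl _, hCm.le⟩
      · simp only [Pi.sub_apply, Pi.smul_apply, Pi.single_eq_of_ne hji, smul_eq_mul,
          mul_zero, sub_zero]
        exact (hmemB αstar).1 hstarB j
    have hβ0 : (αstar - (αstar i) • (Pi.single i 1 : Fin m → ℝ)) i = 0 := by
      simp
    have h2 := focI i _ hβmem hβ0
    -- rewrite h2
    have h2' : αstar i * ((H *ᵥ (αi i) + q) i) ≤ (H *ᵥ (αi i) + q) ⬝ᵥ δ := by
      have e1 : (αstar - (αstar i) • (Pi.single i 1 : Fin m → ℝ)) - αi i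
          = δ - (αstar i) • (Pi.single i 1 : Fin m → ℝ) := by
        rw [hδ]; exact sub_right_comm _ _ _
      rw [e1, dotProduct_sub, dotProduct_smul, smul_eq_mul,
        dotProduct_single, mul_one] at h2
      linarith
    have h1' : (H *ᵥ αstar + q) ⬝ᵥ δ ≤ 0 := by
      have e1 : αi i - αstar = -δ := by rw [hδ]; exact (neg_sub _ _).symm
      rw [e1] at h1
      have : (H *ᵥ αstar + q) ⬝ᵥ (-δ) = -((H *ᵥ αstar + q) ⬝ᵥ δ) := by
        simp [dotProduct_neg]
      rw [this] at h1
      linarith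
    -- δᵀ H δ ≤ αstar i * (H δ)_i
    have hdiff : H *ᵥ δ = (H *ᵥ αstar + q) - (H *ᵥ (αi i) + q) := by
      rw [hδ, Matrix.mulVec_sub]; abel
    have hδHδ : δ ⬝ᵥ (H *ᵥ δ) ≤ - (αstar i * ((H *ᵥ (αi i) + q) i)) := by
      rw [hdiff, dotProduct_sub]
      have c1 : δ ⬝ᵥ (H *ᵥ αstar + q) = (H *ᵥ αstar + q) ⬝ᵥ δ := dotProduct_comm _ _
      have c2 : δ ⬝ᵥ (H *ᵥ (αi i) + q) = (H *ᵥ (αi i) + q) ⬝ᵥ δ := dotProduct_comm _ _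
      rw [c1, c2]
      linarith
    have hHδi : (H *ᵥ δ) i = (H *ᵥ αstar + q) i - (H *ᵥ (αi i) + q) i := by
      rw [hdiff]; simp
    have hHδi_gt : 1 < (H *ᵥ δ) i := by rw [hHδi]; linarith
    have hδHδ' : δ ⬝ᵥ (H *ᵥ δ) ≤ αstar i * (H *ᵥ δ) i := by
      have : - (αstar i * ((H *ᵥ (αi i) + q) i)) ≤ αstar i * (H *ᵥ δ) i := by
        rw [hHδi]
        nlinarith
      linarith
    -- Cauchy-Schwarz : ((Hδ)_i)² ≤ H i i * (δᵀHδ)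
    have hcs : ((H *ᵥ δ) i) ^ 2 ≤ H i i * (δ ⬝ᵥ (H *ᵥ δ)) := by
      have := psd_cs hHpsd ((Pi.single i 1 : Fin m → ℝ)) δ
      have e1 : ((Pi.single i 1 : Fin m → ℝ)) ⬝ᵥ (H *ᵥ δ) = (H *ᵥ δ) i := by
        rw [single_dotProduct, one_mul]
      have e2 : ((Pi.single i 1 : Fin m → ℝ)) ⬝ᵥ (H *ᵥ ((Pi.single i 1 : Fin m → ℝ))) = H i i := by
        simp [single_dotProduct, Matrix.mulVec_single]
      rw [e1, e2] at this
      exact this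
    have hHii := hdiag i
    nlinarith [hHδi_gt, hδHδ', hcs, mul_pos hposi hHii]
  -- counting
  set E := Finset.univ.filter fun i : Fin m =>
    y i * ((fun j => X j i) ⬝ᵥ w (αi i)) < 0 with hE
  set S₁ := Finset.univ.filter (fun i : Fin m => 0 < αstar i ∧ αstar i < C / m) with hS₁
  set S₂ := Finset.univ.filter (fun i : Fin m => αstar i = C / m) with hS₂
  have hsub : E ⊆ (E ∩ S₁) ∪ S₂ := by
    intro i hi
    have hi' := (Finset.mem_filter.mp hi).2
    rcases key i hi' with h | h
    · exact Finset.mem_union_right _ (Finset.mem_filter.mpr ⟨Finset.mem_univ _, h⟩)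
    · exact Finset.mem_union_left _ (Finset.mem_inter.mpr
        ⟨hi, Finset.mem_filter.mpr ⟨Finset.mem_univ _, h.1, h.2.1⟩⟩)
  have hcard : (E.card : ℝ) ≤ ((E ∩ S₁).card : ℝ) + (S₂.card : ℝ) := by
    have := le_trans (Finset.card_le_card hsub) (Finset.card_union_le _ _)
    exact_mod_cast this
  have hsum1 : ((E ∩ S₁).card : ℝ) ≤ ∑ i ∈ E ∩ S₁, αstar i * H i i := by
    calc ((E ∩ S₁).card : ℝ) = ∑ _i ∈ E ∩ S₁, (1:ℝ) := by simp
      _ ≤ ∑ i ∈ E ∩ S₁, αstar i * H i i := by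
        apply Finset.sum_le_sum
        intro i hi
        have hiE := Finset.mem_inter.mp hi
        have hi1 := (Finset.mem_filter.mp hiE.2).2
        have hi2 := (Finset.mem_filter.mp hiE.1).2
        rcases key i hi2 with h | h
        · exact absurd h (ne_of_lt hi1.2)
        · exact h.2.2
  have hsum2 : ∑ i ∈ E ∩ S₁, αstar i * H i i ≤ ∑ i ∈ S₁, αstar i * H i i := by
    apply Finset.sum_le_sum_of_subset_of_nonneg Finset.inter_subset_right
    intro i hi _
    have hi1 := (Finset.mem_filter.mp hi).2
    exact mul_nonneg hi1.1.le (hdiag i).le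
  calc (E.card : ℝ) ≤ ((E ∩ S₁).card : ℝ) + (S₂.card : ℝ) := hcard
    _ ≤ ∑ i ∈ S₁, αstar i * H i i + (S₂.card : ℝ) := by linarith
end

section
/- Let m ≥ 1, X a real d×m matrix with columns x₁,…,x_m, y ∈ {−1,+1}^m, Y = diag(y), e ∈ ℝ^m the all-ones vector, C₁ > 0, C₂ > 0, D ∈ ℝ. Set Q = Y XᵀX Y, let H be the 2m×2m block matrix [[Q + (m/(2C₁)) I, −Q], [−Q, Q + (m/(2C₂)) I]], q = [(D−1)e; (D+1)e] ∈ ℝ^{2m}, and f(α) = (1/2) αᵀHα + qᵀα. Let α* be a minimizer of f over {α ∈ ℝ^{2m} : α ≥ 0}, and for each index i ∈ {1,…,2m} let α^i be a minimizer of f over {α ≥ 0 : α_i = 0}; write α^i = [ζ^i; β^i] with ζ^i, β^i ∈ ℝ^m and set w^i = X Y (ζ^i − β^i). Then: (a) for each i ∈ {1,…,m}, if α*_i > 0 and y_i x_iᵀ w^i < 0, then 1 ≤ α*_i (‖x_i‖² + m/(2C₁)) + D; (b) for each i ∈ {1,…,m}, if α*_{m+i} > 0 and y_i x_iᵀ w^{m+i}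 < 0, then 1 ≤ α*_{m+i} (‖x_i‖² + m/(2C₂)) − D. -/
open Matrix


private lemma aux_nonneg_17 {a b c : ℝ} (hc : 0 < c)
    (h : ∀ t : ℝ, 0 < t → t ≤ c → 0 ≤ a * t + b * t ^ 2) : 0 ≤ a := by
  by_contra hn
  push_neg at hn
  rcases le_or_gt b 0 with hb | hb
  · have := h c hc le_rfl
    nlinarith
  · have ht0 : 0 < min c (-a / (2 * b)) := lt_min hc (div_pos (by linarith) (by positivity))
    have h1 := h _ ht0 (min_le_left _ _)
    have h2 : min c (-a / (2 * b)) ≤ -a / (2 * b) := min_le_right _ _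
    have h3 : min c (-a / (2 * b)) * (2 * b) ≤ -a :=
      (le_div_iff₀ (by positivity)).mp h2
    nlinarith [mul_le_mul_of_nonneg_right h3 ht0.le]

private lemma symm_dot_17 {n : Type*} [Fintype n] (M : Matrix n n ℝ) (hM : Mᵀ = M)
    (u v : n → ℝ) : u ⬝ᵥ (M *ᵥ v) = v ⬝ᵥ (M *ᵥ u) := by
  rw [Matrix.dotProduct_mulVec]
  conv_lhs => rw [← hM]
  rw [Matrix.vecMul_transpose, dotProduct_comm]

private lemma psd_cs_17 {n : Type*} [Fintype n] (M : Matrix n n ℝ) (hM : Mᵀ = M)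
    (hpsd : ∀ v, 0 ≤ v ⬝ᵥ (M *ᵥ v)) (u w : n → ℝ) :
    (u ⬝ᵥ (M *ᵥ w)) ^ 2 ≤ (u ⬝ᵥ (M *ᵥ u)) * (w ⬝ᵥ (M *ᵥ w)) := by
  have key : ∀ t : ℝ, 0 ≤ (u ⬝ᵥ (M *ᵥ u)) * (t * t) + (2 * (u ⬝ᵥ (M *ᵥ w))) * t + (w ⬝ᵥ (M *ᵥ w)) := by
    intro t
    have h := hpsd (w + t • u)
    rw [Matrix.mulVec_add, Matrix.mulVec_smul, dotProduct_add, add_dotProduct,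
      add_dotProduct, dotProduct_smul, smul_dotProduct,
      smul_dotProduct, dotProduct_smul] at h
    have hs := symm_dot_17 M hM w u
    simp only [smul_eq_mul] at h
    rw [hs] at h
    nlinarith [h]
  have hd := discrim_le_zero key
  rw [discrim] at hd
  nlinarith [hd]


set_option maxHeartbeats 1000000 in
/-- The per-coordinate inequalities from the proof of Theorem 3 of the paper: for the dual
ODM problem `min f(α) = (1/2) αᵀHα + qᵀα` over `α ≥ 0`, with `α*` a minimizer, `αᵏ` a
minimizer with the extra constraint `αₖ = 0`, and `wᵏ = X Y (ζᵏ − βᵏ)` the recovered primal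
weight vector, (a) if `α*ᵢ > 0` and example `i` is misclassified by `wⁱ` then
`1 ≤ α*ᵢ (‖xᵢ‖² + m/(2C₁)) + D`, and (b) if `α*_{m+i} > 0` and example `i` is misclassified
by `w^{m+i}` then `1 ≤ α*_{m+i} (‖xᵢ‖² + m/(2C₂)) − D`. -/
theorem stmt_17 {d m : ℕ} (hm : 1 ≤ m) (X : Matrix (Fin d) (Fin m) ℝ)
    (y : Fin m → ℝ) (hy : ∀ i, y i = 1 ∨ y i = -1)
    (Y : Matrix (Fin m) (Fin m) ℝ) (hY : Y = Matrix.diagonal y)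
    (e : Fin m → ℝ) (he : e = fun _ => 1)
    (C₁ C₂ D : ℝ) (hC₁ : 0 < C₁) (hC₂ : 0 < C₂)
    (Q : Matrix (Fin m) (Fin m) ℝ) (hQ : Q = Y * (Xᵀ * X) * Y)
    (H : Matrix (Fin m ⊕ Fin m) (Fin m ⊕ Fin m) ℝ)
    (hH : H = Matrix.fromBlocks (Q + ((m : ℝ) / (2 * C₁)) • 1) (-Q)
                (-Q) (Q + ((m : ℝ) / (2 * C₂)) • 1))
    (q : Fin m ⊕ Fin m → ℝ) (hq : q = Sum.elim ((D - 1) • e) ((D + 1) • e))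
    (f : (Fin m ⊕ Fin m → ℝ) → ℝ)
    (hf : ∀ α, f α = (1 / 2) * (α ⬝ᵥ (H *ᵥ α)) + q ⬝ᵥ α)
    (αstar : Fin m ⊕ Fin m → ℝ)
    (hstar : (∀ j, 0 ≤ αstar j) ∧
      ∀ α : Fin m ⊕ Fin m → ℝ, (∀ j, 0 ≤ α j) → f αstar ≤ f α)
    (αa : (Fin m ⊕ Fin m) → (Fin m ⊕ Fin m → ℝ))
    (hαa : ∀ k, ((∀ j, 0 ≤ αa k j) ∧ αa k k = 0) ∧
      ∀ α : Fin m ⊕ Fin m → ℝ, (∀ j, 0 ≤ α j) → α k = 0 → f (αa k) ≤ f α)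
    (wk : (Fin m ⊕ Fin m) → (Fin d → ℝ))
    (hwk : ∀ k, wk k =
      X *ᵥ (Y *ᵥ ((fun j => αa k (Sum.inl j)) - fun j => αa k (Sum.inr j)))) :
    (∀ i : Fin m, 0 < αstar (Sum.inl i) →
        y i * ((fun j => X j i) ⬝ᵥ wk (Sum.inl i)) < 0 →
        1 ≤ αstar (Sum.inl i) *
              (((fun j => X j i) ⬝ᵥ fun j => X j i) + (m : ℝ) / (2 * C₁)) + D) ∧
    (∀ i : Fin m, 0 < αstar (Sum.inr i) →
        y i * ((fun j => X j i) ⬝ᵥ wk (Sum.inr i)) < 0 →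
        1 ≤ αstar (Sum.inr i) *
              (((fun j => X j i) ⬝ᵥ fun j => X j i) + (m : ℝ) / (2 * C₂)) - D) := by
  obtain ⟨hsnn, hsmin⟩ := hstar
  -- symmetry
  have hQsym : Qᵀ = Q := by
    rw [hQ, hY]
    simp [Matrix.transpose_mul, Matrix.transpose_transpose, Matrix.diagonal_transpose,
      Matrix.mul_assoc]
  have hHsym : Hᵀ = H := by
    rw [hH]
    simp [Matrix.fromBlocks_transpose, Matrix.transpose_add, Matrix.transpose_smul,
      Matrix.transpose_neg, hQsym, Matrix.transpose_one]
  have hsym : ∀ u v : Fin m ⊕ Fin m → ℝ, u ⬝ᵥ (H *ᵥ v) = v ⬝ᵥ (H *ᵥ u) :=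
    symm_dot_17 H hHsym
  -- expansion
  have hexp : ∀ α v : Fin m ⊕ Fin m → ℝ,
      f (α + v) = f α + (H *ᵥ α + q) ⬝ᵥ v + (1 / 2) * (v ⬝ᵥ (H *ᵥ v)) := by
    intro α v
    rw [hf, hf, Matrix.mulVec_add, dotProduct_add, add_dotProduct,
      add_dotProduct, dotProduct_add, add_dotProduct, hsym v α,
      dotProduct_comm (H *ᵥ α) v, hsym v α]
    ring
  -- PSD of Q
  have hdself : ∀ (k : Type) [Fintype k], ∀ v : k → ℝ, 0 ≤ v ⬝ᵥ v :=
    fun k _ v => Finset.sum_nonneg fun j _ => mul_self_nonneg (v j)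
  have hQfact : ∀ u : Fin m → ℝ,
      Q *ᵥ u = Matrix.diagonal y *ᵥ (Xᵀ *ᵥ (X *ᵥ (Matrix.diagonal y *ᵥ u))) := by
    intro u
    simp only [hQ, hY, Matrix.mul_assoc]
    simp only [← Matrix.mulVec_mulVec]
  have hQpsd : ∀ u : Fin m → ℝ, 0 ≤ u ⬝ᵥ (Q *ᵥ u) := by
    intro u
    rw [hQfact]
    have h2 : u ⬝ᵥ (Matrix.diagonal y *ᵥ (Xᵀ *ᵥ (X *ᵥ (Matrix.diagonal y *ᵥ u))))
        = (Matrix.diagonal y *ᵥ u) ⬝ᵥ (Xᵀ *ᵥ (X *ᵥ (Matrix.diagonal y *ᵥ u))) := by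
      rw [Matrix.dotProduct_mulVec]
      congr 1
      funext x
      rw [Matrix.vecMul_diagonal, Matrix.mulVec_diagonal, mul_comm]
    rw [h2, Matrix.dotProduct_mulVec, Matrix.vecMul_transpose]
    exact hdself _ _
  have hHpsd : ∀ v : Fin m ⊕ Fin m → ℝ, 0 ≤ v ⬝ᵥ (H *ᵥ v) := by
    intro v
    have hv : v = Sum.elim (v ∘ Sum.inl) (v ∘ Sum.inr) := by funext j; cases j <;> rfl
    set a := v ∘ Sum.inl with ha
    set b := v ∘ Sum.inr with hb
    rw [hH, hv, Matrix.fromBlocks_mulVec]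
    simp only [Sum.elim_comp_inl, Sum.elim_comp_inr]
    rw [sumElim_dotProduct_sumElim]
    have hexpand : (a - b) ⬝ᵥ (Q *ᵥ (a - b))
        = a ⬝ᵥ (Q *ᵥ a) - a ⬝ᵥ (Q *ᵥ b) - b ⬝ᵥ (Q *ᵥ a) + b ⬝ᵥ (Q *ᵥ b) := by
      rw [Matrix.mulVec_sub, dotProduct_sub, sub_dotProduct,
        sub_dotProduct]
      ring
    have h1 := hQpsd (a - b)
    rw [hexpand] at h1
    have hc1 : (0:ℝ) ≤ (m : ℝ) / (2 * C₁) := by positivity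
    have hc2 : (0:ℝ) ≤ (m : ℝ) / (2 * C₂) := by positivity
    have haa := hdself _ a
    have hbb := hdself _ b
    simp only [Matrix.add_mulVec, Matrix.neg_mulVec, Matrix.smul_mulVec,
      Matrix.one_mulVec, dotProduct_add, dotProduct_neg,
      dotProduct_smul, smul_eq_mul]
    nlinarith [h1, mul_le_mul_of_nonneg_left haa hc1, mul_le_mul_of_nonneg_left hbb hc2]

  -- first-order conditions at αstar
  have hsingle : ∀ (k : Fin m ⊕ Fin m),
      Pi.single k 1 ⬝ᵥ (H *ᵥ Pi.single k 1) = H k k := by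
    intro k
    rw [Matrix.mulVec_single, single_dotProduct]
    simp
  have hg_nonneg : ∀ j, 0 ≤ (H *ᵥ αstar + q) j := by
    intro j
    apply aux_nonneg_17 (b := H j j / 2) (c := 1) one_pos
    intro t ht0 _
    have hfeas : ∀ l, 0 ≤ (αstar + t • (Pi.single j 1 : Fin m ⊕ Fin m → ℝ)) l := by
      intro l
      simp only [Pi.add_apply, Pi.smul_apply, smul_eq_mul]
      rcases eq_or_ne l j with hl | hl
      · subst hl
        rw [Pi.single_eq_same]
        nlinarith [hsnn l]
      · rw [Pi.single_eq_of_ne hl]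
        simpa using hsnn l
    have h := hsmin _ hfeas
    rw [hexp] at h
    rw [dotProduct_smul, dotProduct_single, Matrix.mulVec_smul,
      dotProduct_smul, smul_dotProduct] at h
    rw [hsingle j] at h
    simp only [smul_eq_mul] at h
    nlinarith [h]
  have hg_zero : ∀ j, 0 < αstar j → (H *ᵥ αstar + q) j = 0 := by
    intro j hj
    refine le_antisymm ?_ (hg_nonneg j)
    have key : 0 ≤ -((H *ᵥ αstar + q) j) := by
      apply aux_nonneg_17 (b := H j j / 2) (c := αstar j) hj
      intro t ht0 htc
      have hfeas : ∀ l, 0 ≤ (αstar + (-t) • (Pi.single j 1 : Fin m ⊕ Fin m → ℝ)) l := by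
        intro l
        simp only [Pi.add_apply, Pi.smul_apply, smul_eq_mul]
        rcases eq_or_ne l j with hl | hl
        · subst hl
          rw [Pi.single_eq_same]
          nlinarith
        · rw [Pi.single_eq_of_ne hl]
          simpa using hsnn l
      have h := hsmin _ hfeas
      rw [hexp] at h
      rw [dotProduct_smul, dotProduct_single, Matrix.mulVec_smul,
        dotProduct_smul, smul_dotProduct] at h
      rw [hsingle j] at h
      simp only [smul_eq_mul] at h
      nlinarith [h]
    linarith
  -- key bound
  have keyk : ∀ k, 0 < αstar k → |(H *ᵥ αa k + q) k| ≤ αstar k * H k k := by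
    intro k hk
    obtain ⟨⟨hann, hakk⟩, hamin⟩ := hαa k
    have hδeq : αstar + (αa k - αstar) = αa k := by
      funext l
      simp
    have hfeas1 : ∀ l, 0 ≤ (αstar + (-(αstar k)) • (Pi.single k 1 : Fin m ⊕ Fin m → ℝ)) l := by
      intro l
      simp only [Pi.add_apply, Pi.smul_apply, smul_eq_mul]
      rcases eq_or_ne l k with hl | hl
      · subst hl
        rw [Pi.single_eq_same]
        nlinarith [hsnn l]
      · rw [Pi.single_eq_of_ne hl]
        simpa using hsnn l
    have hfeas2 : (αstar + (-(αstar k)) • (Pi.single k 1 : Fin m ⊕ Fin m → ℝ)) k = 0 := by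
      simp [Pi.single_eq_same]
    have h1 : f (αa k) ≤ f (αstar + (-(αstar k)) • (Pi.single k 1 : Fin m ⊕ Fin m → ℝ)) :=
      hamin _ hfeas1 hfeas2
    rw [hexp, ← hδeq, hexp] at h1
    have hgk : (H *ᵥ αstar + q) k = 0 := hg_zero k hk
    have hgδ : 0 ≤ (H *ᵥ αstar + q) ⬝ᵥ (αa k - αstar) := by
      apply Finset.sum_nonneg
      intro j _
      have hterm : (H *ᵥ αstar + q) j * (αa k - αstar) j
          = (H *ᵥ αstar + q) j * αa k j - (H *ᵥ αstar + q) j * αstar j := by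
        simp [mul_sub]
      rcases eq_or_lt_of_le (hsnn j) with hj | hj
      · rw [hterm, ← hj]
        simpa using mul_nonneg (hg_nonneg j) (hann j)
      · rw [hterm, hg_zero j hj]
        simp
    rw [dotProduct_smul, dotProduct_single, Matrix.mulVec_smul,
      dotProduct_smul, smul_dotProduct, hgk] at h1
    rw [hsingle k] at h1
    simp only [smul_eq_mul] at h1
    have hquad : (αa k - αstar) ⬝ᵥ (H *ᵥ (αa k - αstar))
        ≤ αstar k * αstar k * H k k := by nlinarith [h1, hgδ]
    have hcs := psd_cs_17 H hHsym hHpsd (Pi.single k 1) (αa k - αstar)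
    rw [hsingle k] at hcs
    have hGd : Pi.single k 1 ⬝ᵥ (H *ᵥ (αa k - αstar)) = (H *ᵥ αa k + q) k := by
      rw [single_dotProduct, Matrix.mulVec_sub]
      have hgk' : (H *ᵥ αstar) k = -q k := by
        have := hg_zero k hk
        simp only [Pi.add_apply] at this
        linarith
      simp only [Pi.sub_apply, hgk', Pi.add_apply]
      ring
    rw [hGd] at hcs
    have hHkk : 0 ≤ H k k := by
      rw [← hsingle k]
      exact hHpsd _
    have hsq : ((H *ᵥ αa k + q) k) ^ 2 ≤ (αstar k * H k k) ^ 2 := by nlinarith [hcs, hquad, hHkk]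
    have h0 : 0 ≤ αstar k * H k k := mul_nonneg hk.le hHkk
    nlinarith [abs_nonneg ((H *ᵥ αa k + q) k), sq_abs ((H *ᵥ αa k + q) k), hsq, h0]
  
  -- component computations
  have hQrow : ∀ (u : Fin m → ℝ) (i : Fin m),
      (Q *ᵥ u) i = y i * ((fun j => X j i) ⬝ᵥ (X *ᵥ (Matrix.diagonal y *ᵥ u))) := by
    intro u i
    rw [hQfact, Matrix.mulVec_diagonal]
    rfl
  have hQdiag : ∀ i : Fin m, Q i i = (fun j => X j i) ⬝ᵥ (fun j => X j i) := by
    intro i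
    rw [hQ, hY]
    have h1 : (Matrix.diagonal y * (Xᵀ * X) * Matrix.diagonal y) i i
        = y i * ((Xᵀ * X) i i) * y i := by
      rw [Matrix.mul_diagonal, Matrix.diagonal_mul]
    rw [h1]
    have h2 : (Xᵀ * X) i i = (fun j => X j i) ⬝ᵥ (fun j => X j i) := by
      simp [Matrix.mul_apply, dotProduct, Matrix.transpose_apply]
    rw [h2]
    rcases hy i with h | h <;> rw [h] <;> ring
  constructor
  · intro i hpos hmis
    have hk := keyk (Sum.inl i) hpos
    have hakk : αa (Sum.inl i) (Sum.inl i) = 0 := (hαa (Sum.inl i)).1.2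
    have helim : αa (Sum.inl i) = Sum.elim (fun j => αa (Sum.inl i) (Sum.inl j))
        (fun j => αa (Sum.inl i) (Sum.inr j)) := by
      funext l; cases l <;> rfl
    have hmulv : (H *ᵥ αa (Sum.inl i)) (Sum.inl i)
        = y i * ((fun j => X j i) ⬝ᵥ wk (Sum.inl i)) := by
      conv_lhs => rw [hH, helim, Matrix.fromBlocks_mulVec]
      simp only [Sum.elim_comp_inl, Sum.elim_comp_inr, Sum.elim_inl, Pi.add_apply]
      rw [Matrix.add_mulVec, Matrix.smul_mulVec, Matrix.one_mulVec, Matrix.neg_mulVec]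
      simp only [Pi.add_apply, Pi.smul_apply, Pi.neg_apply, smul_eq_mul]
      have hsub : (Q *ᵥ ((fun j => αa (Sum.inl i) (Sum.inl j))
          - fun j => αa (Sum.inl i) (Sum.inr j))) i
          = (Q *ᵥ fun j => αa (Sum.inl i) (Sum.inl j)) i
            - (Q *ᵥ fun j => αa (Sum.inl i) (Sum.inr j)) i := by
        rw [Matrix.mulVec_sub]; rfl
      have hval : (Q *ᵥ ((fun j => αa (Sum.inl i) (Sum.inl j))
          - fun j => αa (Sum.inl i) (Sum.inr j))) i
          = y i * ((fun j => X j i) ⬝ᵥ wk (Sum.inl i)) := by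
        rw [hQrow, hwk, hY]
      rw [← hval, hsub, hakk]
      ring
    have hqk : q (Sum.inl i) = D - 1 := by
      rw [hq, he]; simp
    have hHkk : H (Sum.inl i) (Sum.inl i)
        = ((fun j => X j i) ⬝ᵥ (fun j => X j i)) + (m : ℝ) / (2 * C₁) := by
      rw [hH]
      simp only [Matrix.fromBlocks_apply₁₁, Matrix.add_apply, Matrix.smul_apply,
        Matrix.one_apply_eq, smul_eq_mul, mul_one]
      rw [hQdiag]
    rw [hHkk] at hk
    have habs := abs_le.mp hk
    have h1 := habs.1
    simp only [Pi.add_apply, hmulv, hqk] at h1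
    linarith
  · intro i hpos hmis
    have hk := keyk (Sum.inr i) hpos
    have hakk : αa (Sum.inr i) (Sum.inr i) = 0 := (hαa (Sum.inr i)).1.2
    have helim : αa (Sum.inr i) = Sum.elim (fun j => αa (Sum.inr i) (Sum.inl j))
        (fun j => αa (Sum.inr i) (Sum.inr j)) := by
      funext l; cases l <;> rfl
    have hmulv : (H *ᵥ αa (Sum.inr i)) (Sum.inr i)
        = -(y i * ((fun j => X j i) ⬝ᵥ wk (Sum.inr i))) := by
      conv_lhs => rw [hH, helim, Matrix.fromBlocks_mulVec]
      simp only [Sum.elim_comp_inl, Sum.elim_comp_inr, Sum.elim_inr, Pi.add_apply]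
      rw [Matrix.add_mulVec, Matrix.smul_mulVec, Matrix.one_mulVec, Matrix.neg_mulVec]
      simp only [Pi.add_apply, Pi.smul_apply, Pi.neg_apply, smul_eq_mul]
      have hsub : (Q *ᵥ ((fun j => αa (Sum.inr i) (Sum.inl j))
          - fun j => αa (Sum.inr i) (Sum.inr j))) i
          = (Q *ᵥ fun j => αa (Sum.inr i) (Sum.inl j)) i
            - (Q *ᵥ fun j => αa (Sum.inr i) (Sum.inr j)) i := by
        rw [Matrix.mulVec_sub]; rfl
      have hval : (Q *ᵥ ((fun j => αa (Sum.inr i) (Sum.inl j))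
          - fun j => αa (Sum.inr i) (Sum.inr j))) i
          = y i * ((fun j => X j i) ⬝ᵥ wk (Sum.inr i)) := by
        rw [hQrow, hwk, hY]
      rw [← hval, hsub, hakk]
      ring
    have hqk : q (Sum.inr i) = D + 1 := by
      rw [hq, he]; simp
    have hHkk : H (Sum.inr i) (Sum.inr i)
        = ((fun j => X j i) ⬝ᵥ (fun j => X j i)) + (m : ℝ) / (2 * C₂) := by
      rw [hH]
      simp only [Matrix.fromBlocks_apply₂₂, Matrix.add_apply, Matrix.smul_apply,
        Matrix.one_apply_eq, smul_eq_mul, mul_one]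
      rw [hQdiag]
    rw [hHkk] at hk
    have habs := abs_le.mp hk
    have h2 := habs.2
    simp only [Pi.add_apply, hmulv, hqk] at h2
    linarith
end
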